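/- The explicit GL₃ geometric crystal action e₁^d(t;c₁,c₂,c₃) = (t; c₁(c₂+c₁c₃)/(d·c₂+c₁c₃), c₂, c₃(c₂+d⁻¹c₁c₃)/(c₂+c₁c₃)) is a 𝔾ₘ-action: e₁^{d'}∘e₁^{d} = e₁^{d'd} and e₁^1 = id, wherever all denominators are nonzero. -/

import Mathlib

def e1GL3 {F : Type*} [Field F] (d : F) (c : F × F × F) : F × F × F :=
  let (c₁, c₂, c₃) := c
  (c₁ * (c₂ + c₁ * c₃) / (d * c₂ + c₁ * c₃), c₂,
   c₃ * (c₂ + d⁻¹ * c₁ * c₃) / (c₂ + c₁ * c₃))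

lemma e1GL3_eq {F : Type*} [Field F] (d c₁ c₂ c₃ : F) (hd : d ≠ 0)
    (h1 : c₂ + c₁ * c₃ ≠ 0) :
    e1GL3 d (c₁, c₂, c₃) =
      (c₁ * (c₂ + c₁ * c₃) / (d * c₂ + c₁ * c₃), c₂,
       c₃ * (d * c₂ + c₁ * c₃) / (d * (c₂ + c₁ * c₃))) := by
  simp only [e1GL3]
  refine Prod.ext rfl (Prod.ext rfl ?_)
  rw [div_eq_div_iff h1 (mul_ne_zero hd h1)]
  field_simp

set_option maxHeartbeats 1000000 in
/-- The explicit GL₃ geometric crystal action e₁ is a 𝔾ₘ-action. -/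
theorem e1GL3_action {F : Type*} [Field F] (d d' c₁ c₂ c₃ : F)
    (hd : d ≠ 0) (hd' : d' ≠ 0)
    (h1 : c₂ + c₁ * c₃ ≠ 0) (h2 : d * c₂ + c₁ * c₃ ≠ 0)
    (h3 : (e1GL3 d (c₁, c₂, c₃)).2.1
        + (e1GL3 d (c₁, c₂, c₃)).1 * (e1GL3 d (c₁, c₂, c₃)).2.2 ≠ 0)
    (h4 : d' * (e1GL3 d (c₁, c₂, c₃)).2.1
        + (e1GL3 d (c₁, c₂, c₃)).1 * (e1GL3 d (c₁, c₂, c₃)).2.2 ≠ 0)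
    (h5 : d' * d * c₂ + c₁ * c₃ ≠ 0) :
    e1GL3 d' (e1GL3 d (c₁, c₂, c₃)) = e1GL3 (d' * d) (c₁, c₂, c₃) ∧
    e1GL3 (1 : F) (c₁, c₂, c₃) = (c₁, c₂, c₃) := by
  clear h3 h4
  have hdd : d' * d ≠ 0 := mul_ne_zero hd' hd
  constructor
  · rw [e1GL3_eq d c₁ c₂ c₃ hd h1, e1GL3_eq (d' * d) c₁ c₂ c₃ hdd h1]
    set X := c₁ * (c₂ + c₁ * c₃) / (d * c₂ + c₁ * c₃) with hX
    set Y := c₃ * (d * c₂ + c₁ * c₃) / (d * (c₂ + c₁ * c₃)) with hY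
    have hXY : X * Y = c₁ * c₃ / d := by
      rw [hX, hY, div_mul_div_comm, div_eq_div_iff (mul_ne_zero h2 (mul_ne_zero hd h1)) hd]; ring
    have hA : c₂ + X * Y ≠ 0 := by
      rw [hXY]
      intro h
      apply h2
      have := congrArg (· * d) h
      field_simp at this
      linear_combination this
    have hA' : c₂ + X * Y = (d * c₂ + c₁ * c₃) / d := by
      rw [hXY]; field_simp
    have hB' : d' * c₂ + X * Y = (d' * d * c₂ + c₁ * c₃) / d := by
      rw [hXY]; field_simp
    rw [e1GL3_eq d' X c₂ Y hd' hA]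
    refine Prod.ext ?_ (Prod.ext rfl ?_)
    · show X * (c₂ + X * Y) / (d' * c₂ + X * Y)
          = c₁ * (c₂ + c₁ * c₃) / (d' * d * c₂ + c₁ * c₃)
      rw [hA', hB', hX]
      rw [div_eq_div_iff (div_ne_zero h5 hd) h5]
      simp only [div_eq_mul_inv]
      linear_combination (c₁ * (c₂ + c₁ * c₃) * d⁻¹ * (d' * d * c₂ + c₁ * c₃)) * mul_inv_cancel₀ h2
    · show Y * (d' * c₂ + X * Y) / (d' * (c₂ + X * Y))
          = c₃ * (d' * d * c₂ + c₁ * c₃) / (d' * d * (c₂ + c₁ * c₃))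
      rw [hA', hB', hY]
      rw [div_eq_div_iff (mul_ne_zero hd' (div_ne_zero h2 hd)) (mul_ne_zero hdd h1)]
      simp only [div_eq_mul_inv, mul_inv]
      linear_combination (c₃ * (d * c₂ + c₁ * c₃) * (d' * d * c₂ + c₁ * c₃) * d' * d⁻¹ * ((c₂ + c₁ * c₃) * (c₂ + c₁ * c₃)⁻¹)) * mul_inv_cancel₀ hd + (c₃ * (d * c₂ + c₁ * c₃) * (d' * d * c₂ + c₁ * c₃) * d' * d⁻¹) * mul_inv_cancel₀ h1
  · simp only [e1GL3, inv_one, one_mul]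
    rw [mul_div_assoc, mul_div_assoc, div_self h1, mul_one, mul_one]
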